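/- Let 𝒯_n denote the set of plane binary trees with n internal nodes. For T ∈ 𝒯_n, let E(T) be the set of linear extensions of T (bijective labelings of the internal nodes by {1,…,n} in which each internal node's label is smaller than the labels of its internal-node children), and for e ∈ E(T) let w_e be the word reading the labels of the internal nodes from left to right (in-order). Then for every n ≥ 0: ∑_{T ∈ 𝒯_n} ∑_{e ∈ E(T)} q^{inv(w_e)} = [n]_q!, as an identity of polynomials in ℕ[q], where [n]_q! = [n]_q [n-1]_q ⋯ [1]_q and [k]_q = 1 + q + ⋯ + q^{k-1}. -/

import Mathlib

open Polynomial
open scoped Classical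

/-- A plane binary tree: either the empty tree `∅` (a single leaf attached to the root,
no internal nodes), or the graft `T₁ ∨ T₂` of two plane binary trees (joined at a new
internal node attached to a new root). -/
inductive PBT : Type
  | empty : PBT
  | graft : PBT → PBT → PBT
deriving DecidableEq

/-- The number of internal nodes of a plane binary tree. -/
def PBT.size : PBT → ℕ
  | empty => 0
  | graft l r => size l + size r + 1

/-- A plane binary tree whose internal nodes carry natural-number labels. -/
inductive LPBT : Type
  | empty : LPBT
  | graft : LPBT → ℕ → LPBT → LPBT
deriving DecidableEq

namespace LPBT

/-- The underlying (unlabeled) plane binary tree of a labeled tree. -/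
def shape : LPBT → PBT
  | empty => PBT.empty
  | graft l _ r => PBT.graft (shape l) (shape r)

/-- The word reading the labels of the internal nodes from left to right (in-order). -/
def inorder : LPBT → List ℕ
  | empty => []
  | graft l a r => inorder l ++ a :: inorder r

/-- The label of the root internal node, if any. -/
def rootLabel? : LPBT → Option ℕ
  | empty => none
  | graft _ a _ => some a

/-- The increasing (linear-extension) condition: every internal node's label is smaller
than the labels of its internal-node children. -/
def IsIncreasing : LPBT → Prop
  | empty => True
  | graft l a r =>
      (∀ b ∈ rootLabel? l, a < b) ∧ (∀ b ∈ rootLabel? r, a < b) ∧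
        IsIncreasing l ∧ IsIncreasing r

end LPBT

/-- The set of linear extensions of a plane binary tree `T` with `n` internal nodes,
encoded as labeled trees of shape `T` whose labels are a bijective labeling by
`{1, …, n}` (the in-order word is a rearrangement of `[1, …, n]`) satisfying the
increasing condition.  The in-order word of such a labeled tree is the word `w_e`. -/
def linExts (T : PBT) : Set LPBT :=
  {L : LPBT | L.shape = T ∧ L.inorder.Perm (List.range' 1 T.size) ∧ L.IsIncreasing}

/-- The number of inversions of a word `w`: the number of pairs of positions `i < j`
with `w_i > w_j`. -/
def invCount (w : List ℕ) : ℕ :=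
  (Finset.univ.filter fun p : Fin w.length × Fin w.length =>
    p.1 < p.2 ∧ w.get p.2 < w.get p.1).card

/-- The `q`-integer `[k]_q = 1 + q + ⋯ + q^{k-1}` in `ℕ[q]` (with `q = X`). -/
noncomputable def qInt (k : ℕ) : Polynomial ℕ :=
  ∑ j ∈ Finset.range k, X ^ j

/-- The `q`-factorial `[n]_q! = [n]_q [n-1]_q ⋯ [1]_q` in `ℕ[q]`. -/
noncomputable def qFact (n : ℕ) : Polynomial ℕ :=
  ∏ k ∈ Finset.range n, qInt (k + 1)


section Auxiliary

namespace LPBT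

lemma length_inorder : ∀ L : LPBT, L.inorder.length = L.shape.size := by
  intro L
  induction L with
  | empty => rfl
  | graft l a r ihl ihr => simp [inorder, shape, PBT.size, ihl, ihr]; omega

lemma root_min : ∀ L : LPBT, L.IsIncreasing → ∀ c ∈ L.rootLabel?, ∀ b ∈ L.inorder, c ≤ b := by
  intro L
  induction L with
  | empty => intro _ c hc; simp [rootLabel?] at hc
  | graft l a r ihl ihr =>
    intro h c hc b hb
    simp [rootLabel?] at hc
    subst hc
    obtain ⟨hl, hr, hil, hir⟩ := h
    simp [inorder] at hb
    rcases hb with hb | rfl | hb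
    · cases l with
      | empty => simp [inorder] at hb
      | graft l1 c1 r1 =>
        have h1 := ihl hil c1 (by simp [rootLabel?]) b hb
        have h2 := hl c1 (by simp [rootLabel?])
        omega
    · exact le_refl _
    · cases r with
      | empty => simp [inorder] at hb
      | graft l1 c1 r1 =>
        have h1 := ihr hir c1 (by simp [rootLabel?]) b hb
        have h2 := hr c1 (by simp [rootLabel?])
        omega

lemma rootLabel_mem : ∀ L : LPBT, ∀ c ∈ L.rootLabel?, c ∈ L.inorder := by
  intro L c hc
  cases L with
  | empty => simp [rootLabel?] at hc
  | graft l a r => simp [rootLabel?] at hc; subst hc; simp [inorder]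

end LPBT

lemma split_unique {a : ℕ} : ∀ u₁ v₁ u₂ v₂ : List ℕ, u₁ ++ a :: v₁ = u₂ ++ a :: v₂ →
    a ∉ u₁ → a ∉ u₂ → u₁ = u₂ ∧ v₁ = v₂ := by
  intro u₁
  induction u₁ with
  | nil =>
    intro v₁ u₂ v₂ h h1 h2
    cases u₂ with
    | nil => simpa using h
    | cons b u₂' =>
      simp at h
      exact absurd (h.1 ▸ (List.mem_cons_self : b ∈ b :: u₂')) h2
  | cons b u₁' ih =>
    intro v₁ u₂ v₂ h h1 h2
    cases u₂ with
    | nil =>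
      simp at h
      exact absurd (h.1 ▸ (List.mem_cons_self : b ∈ b :: u₁')) h1
    | cons c u₂' =>
      simp at h
      obtain ⟨rfl, h⟩ := h
      have := ih v₁ u₂' v₂ h (fun hm => h1 (List.mem_cons_of_mem _ hm))
        (fun hm => h2 (List.mem_cons_of_mem _ hm))
      exact ⟨by rw [this.1], this.2⟩

lemma nodup_split {a : ℕ} {u v : List ℕ} (h : (u ++ a :: v).Nodup) :
    a ∉ u ∧ a ∉ v ∧ u.Nodup ∧ v.Nodup := by
  rw [List.nodup_append] at h
  obtain ⟨hu, hav, hd⟩ := h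
  rw [List.nodup_cons] at hav
  exact ⟨fun hm => hd a hm a (List.mem_cons_self : a ∈ a :: v) rfl, hav.1, hu, hav.2⟩

lemma increasing_unique : ∀ L₁ L₂ : LPBT, L₁.IsIncreasing → L₂.IsIncreasing →
    L₁.inorder.Nodup → L₁.inorder = L₂.inorder → L₁ = L₂ := by
  intro L₁
  induction L₁ with
  | empty =>
    intro L₂ _ _ _ h
    cases L₂ with
    | empty => rfl
    | graft l a r => simp [LPBT.inorder] at h
  | graft l a r ihl ihr =>
    intro L₂ h1 h2 hnd heq
    cases L₂ with
    | empty => simp [LPBT.inorder] at heq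
    | graft l' a' r' =>
      simp only [LPBT.inorder] at heq hnd
      have ha : a = a' := by
        have hmem : a' ∈ l.inorder ++ a :: r.inorder := by
          rw [heq]; simp
        have hmem' : a ∈ l'.inorder ++ a' :: r'.inorder := by
          rw [← heq]; simp
        have h1' := LPBT.root_min _ h1 a (by simp [LPBT.rootLabel?]) a'
          (by simpa [LPBT.inorder] using hmem)
        have h2' := LPBT.root_min _ h2 a' (by simp [LPBT.rootLabel?]) a
          (by simpa [LPBT.inorder] using hmem')
        omega
      subst ha
      obtain ⟨hnl, hnr, hul, hur⟩ := nodup_split hnd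
      have hnd' : (l'.inorder ++ a :: r'.inorder).Nodup := heq ▸ hnd
      obtain ⟨hnl', _, _, _⟩ := nodup_split hnd'
      obtain ⟨e1, e2⟩ := split_unique _ _ _ _ heq hnl hnl'
      obtain ⟨_, _, hil, hir⟩ := h1
      obtain ⟨_, _, hil', hir'⟩ := h2
      rw [ihl l' hil hil' hul e1, ihr r' hir hir' hur e2]

lemma exists_list_min : ∀ w : List ℕ, w ≠ [] → ∃ m ∈ w, ∀ b ∈ w, m ≤ b := by
  intro w
  induction w with
  | nil => intro h; exact absurd rfl h
  | cons a w ih =>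
    intro _
    cases w with
    | nil => exact ⟨a, by simp⟩
    | cons b w' =>
      obtain ⟨m, hm, hmin⟩ := ih (by simp)
      refine ⟨min a m, ?_, ?_⟩
      · rcases le_total a m with h | h
        · simp [min_eq_left h]
        · simp only [min_eq_right h]; exact List.mem_cons_of_mem _ hm
      · intro c hc
        rcases List.mem_cons.mp hc with rfl | hc
        · exact min_le_left _ _
        · exact le_trans (min_le_right _ _) (hmin c hc)

lemma exists_increasing : ∀ n : ℕ, ∀ w : List ℕ, w.length = n → w.Nodup →
    ∃ L : LPBT, L.inorder = w ∧ L.IsIncreasing := by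
  intro n
  induction n using Nat.strong_induction_on with
  | _ n ih =>
    intro w hlen hnd
    cases hw : w with
    | nil => exact ⟨LPBT.empty, rfl, trivial⟩
    | cons x w' =>
      subst hw
      obtain ⟨m, hm, hmin⟩ := exists_list_min (x :: w') (by simp)
      obtain ⟨u, v, huv⟩ := List.append_of_mem hm
      rw [huv] at hnd hlen ⊢
      obtain ⟨hmu, hmv, hun, hvn⟩ := nodup_split hnd
      have hlu : u.length < n := by simp at hlen; omega
      have hlv : v.length < n := by simp at hlen; omega
      obtain ⟨Lu, hLu, hLui⟩ := ih u.length hlu u rfl hun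
      obtain ⟨Lv, hLv, hLvi⟩ := ih v.length hlv v rfl hvn
      refine ⟨LPBT.graft Lu m Lv, by simp [LPBT.inorder, hLu, hLv], ?_, ?_, hLui, hLvi⟩
      · intro b hb
        have hb' : b ∈ u := hLu ▸ LPBT.rootLabel_mem Lu b hb
        have h1 : m ≤ b := hmin b (by rw [huv]; exact List.mem_append_left _ hb')
        have h2 : b ≠ m := fun h => hmu (h ▸ hb')
        omega
      · intro b hb
        have hb' : b ∈ v := hLv ▸ LPBT.rootLabel_mem Lv b hb
        have h1 : m ≤ b := hmin b (by rw [huv]; simp [hb'])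
        have h2 : b ≠ m := fun h => hmv (h ▸ hb')
        omega

lemma invCount_nil : invCount [] = 0 := by
  simp [invCount]

lemma countP_eq_sum (p : ℕ → Prop) [DecidablePred p] :
    ∀ w : List ℕ, (∑ j : Fin w.length, if p (w.get j) then 1 else 0) =
      w.countP (fun b => decide (p b)) := by
  intro w
  induction w with
  | nil => simp
  | cons a w ih =>
    rw [show (∑ j : Fin (a :: w).length, if p ((a :: w).get j) then 1 else 0) =
      (∑ j : Fin (w.length + 1), if p ((a :: w).get j) then 1 else 0) from rfl,
      Fin.sum_univ_succ]
    simp only [List.get_cons_succ']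
    rw [ih, List.countP_cons]
    simp [List.get_cons_zero]
    by_cases h : p a <;> simp [h] <;> omega

lemma invCount_cons (a : ℕ) (w : List ℕ) :
    invCount (a :: w) = w.countP (fun b => decide (b < a)) + invCount w := by
  have key : ∀ (v : List ℕ), invCount v =
      ∑ i : Fin v.length, ∑ j : Fin v.length, if i < j ∧ v.get j < v.get i then 1 else 0 := by
    intro v
    rw [invCount, Finset.card_filter, Fintype.sum_prod_type]
  rw [key, key w, ← countP_eq_sum (fun b => b < a) w]
  rw [show (∑ i : Fin (a :: w).length, ∑ j : Fin (a :: w).length,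
        if i < j ∧ (a :: w).get j < (a :: w).get i then 1 else 0) =
      (∑ i : Fin (w.length + 1), ∑ j : Fin (w.length + 1),
        if i < j ∧ (a :: w).get j < (a :: w).get i then 1 else 0) from rfl,
      Fin.sum_univ_succ]
  congr 1
  · rw [Fin.sum_univ_succ]
    simp [Fin.succ_pos, List.get_cons_succ', List.get_cons_zero]
  · apply Finset.sum_congr rfl
    intro i _
    rw [Fin.sum_univ_succ]
    simp [Fin.succ_lt_succ_iff, List.get_cons_succ', Fin.not_lt_zero]

lemma invCount_insert (m : ℕ) : ∀ (u v : List ℕ), (∀ b ∈ u, b < m) → (∀ b ∈ v, b < m) →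
    invCount (u ++ m :: v) = invCount (u ++ v) + v.length := by
  intro u
  induction u with
  | nil =>
    intro v _ hv
    rw [List.nil_append, List.nil_append, invCount_cons]
    have : v.countP (fun b => decide (b < m)) = v.length := by
      rw [List.countP_eq_length]
      intro b hb
      simpa using hv b hb
    omega
  | cons a u' ih =>
    intro v hu hv
    have ham : a < m := hu a (List.mem_cons_self : a ∈ a :: u')
    rw [List.cons_append, invCount_cons, List.cons_append, invCount_cons,
      ih v (fun b hb => hu b (List.mem_cons_of_mem _ hb)) hv]
    have : (u' ++ m :: v).countP (fun b => decide (b < a)) =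
        (u' ++ v).countP (fun b => decide (b < a)) := by
      rw [List.countP_append, List.countP_append, List.countP_cons]
      have : ¬ (m < a) := by omega
      simp [this]
    omega

lemma perm_range'_lt {w : List ℕ} {n : ℕ} (h : w.Perm (List.range' 1 n)) :
    ∀ b ∈ w, b < n + 1 := by
  intro b hb
  have := h.mem_iff.mp hb
  simp [List.mem_range'_1] at this
  omega

lemma range'_succ_perm (n : ℕ) :
    (List.range' 1 (n + 1)).Perm ((n + 1) :: List.range' 1 n) := by
  rw [List.range'_concat]
  have := List.perm_middle (a := 1 + n) (l₁ := List.range' 1 n) (l₂ := ([] : List ℕ))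
  simpa [Nat.add_comm 1 n] using this

lemma mahon (n : ℕ) : (∑ w ∈ ((List.range' 1 n).permutations).toFinset,
    (X : Polynomial ℕ) ^ invCount w) = qFact n := by
  induction n with
  | zero => simp [qFact, invCount_nil]
  | succ n ih =>
    have key : (∑ p ∈ (Finset.range (n + 1)) ×ˢ ((List.range' 1 n).permutations).toFinset,
        (X : Polynomial ℕ) ^ (invCount p.2 + (n - p.1)))
        = ∑ w ∈ ((List.range' 1 (n + 1)).permutations).toFinset,
        (X : Polynomial ℕ) ^ invCount w := by
      apply Finset.sum_bij (fun p _ => List.take p.1 p.2 ++ (n + 1) :: List.drop p.1 p.2)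
      · rintro ⟨i, w⟩ hp
        rw [Finset.mem_product, Finset.mem_range] at hp
        obtain ⟨hi, hw⟩ := hp
        rw [List.mem_toFinset, List.mem_permutations] at hw ⊢
        have h1 : (List.take i w ++ (n + 1) :: List.drop i w).Perm ((n + 1) :: w) := by
          have := List.perm_middle (a := n + 1) (l₁ := List.take i w) (l₂ := List.drop i w)
          rwa [List.take_append_drop] at this
        exact h1.trans ((hw.cons _).trans (range'_succ_perm n).symm)
      · rintro ⟨i, w⟩ hp ⟨i', w'⟩ hp' heq
        rw [Finset.mem_product, Finset.mem_range, List.mem_toFinset,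
          List.mem_permutations] at hp hp'
        obtain ⟨hi, hw⟩ := hp
        obtain ⟨hi', hw'⟩ := hp'
        have hn1 : (n + 1) ∉ List.take i w := fun hmem =>
          absurd (perm_range'_lt hw _ (List.mem_of_mem_take hmem)) (by omega)
        have hn1' : (n + 1) ∉ List.take i' w' := fun hmem =>
          absurd (perm_range'_lt hw' _ (List.mem_of_mem_take hmem)) (by omega)
        obtain ⟨e1, e2⟩ := split_unique _ _ _ _ heq hn1 hn1'
        have hww : w = w' := by
          rw [← List.take_append_drop i w, ← List.take_append_drop i' w', e1, e2]
        have hlen : w.length = n := hw.length_eq.trans (by simp)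
        have hlen' : w'.length = n := hw'.length_eq.trans (by simp)
        have hle : i = i' := by
          have hlt := congrArg List.length e1
          simp only [List.length_take, hlen, hlen'] at hlt
          rw [min_eq_left (by omega), min_eq_left (by omega)] at hlt
          exact hlt
        simp [hle, hww]
      · intro w hw
        rw [List.mem_toFinset, List.mem_permutations] at hw
        have hmem : (n + 1) ∈ w := hw.mem_iff.mpr (by simp [List.mem_range'_1])
        obtain ⟨u, v, huv⟩ := List.append_of_mem hmem
        have hperm : (u ++ v).Perm (List.range' 1 n) := by
          have h1 : ((n + 1) :: (u ++ v)).Perm ((n + 1) :: List.range' 1 n) := by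
            have h2 : ((n + 1) :: (u ++ v)).Perm w := by
              rw [huv]; exact List.perm_middle.symm
            exact h2.trans (hw.trans (range'_succ_perm n))
          exact h1.cons_inv
        have hulen : u.length ≤ n := by
          have := hperm.length_eq
          simp at this
          omega
        refine ⟨⟨u.length, u ++ v⟩, ?_, ?_⟩
        · rw [Finset.mem_product, Finset.mem_range, List.mem_toFinset, List.mem_permutations]
          exact ⟨by omega, hperm⟩
        · rw [List.take_left, List.drop_left, huv]
      · rintro ⟨i, w⟩ hp
        rw [Finset.mem_product, Finset.mem_range, List.mem_toFinset,
          List.mem_permutations] at hp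
        obtain ⟨hi, hw⟩ := hp
        have hlt : ∀ b ∈ w, b < n + 1 := perm_range'_lt hw
        have := invCount_insert (n + 1) (List.take i w) (List.drop i w)
          (fun b hb => hlt b (List.mem_of_mem_take hb))
          (fun b hb => hlt b (List.mem_of_mem_drop hb))
        rw [List.take_append_drop] at this
        rw [this, List.length_drop, hw.length_eq]
        simp
    rw [← key, Finset.sum_product]
    have : ∀ i ∈ Finset.range (n + 1),
        (∑ w ∈ ((List.range' 1 n).permutations).toFinset,
          (X : Polynomial ℕ) ^ (invCount w + (n - i)))
        = qFact n * X ^ (n - i) := by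
      intro i _
      rw [← ih, Finset.sum_mul]
      exact Finset.sum_congr rfl fun w _ => by rw [pow_add]
    rw [Finset.sum_congr rfl this, ← Finset.mul_sum]
    conv_rhs => rw [qFact, Finset.prod_range_succ, ← qFact]
    congr 1
    rw [qInt, ← Finset.sum_range_reflect (fun j => (X : Polynomial ℕ) ^ j) (n + 1)]
    apply Finset.sum_congr rfl
    intro i hi
    rw [Finset.mem_range] at hi
    have h : n + 1 - 1 - i = n - i := by omega
    rw [h]

lemma finite_sized : ∀ n : ℕ, {T : PBT | T.size = n}.Finite := by
  intro n
  induction n using Nat.strong_induction_on with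
  | _ n ih =>
    cases n with
    | zero =>
      apply Set.Finite.subset (Set.finite_singleton PBT.empty)
      intro T hT
      cases T with
      | empty => simp
      | graft l r => simp [PBT.size] at hT
    | succ m =>
      have hsub : {T : PBT | T.size = m + 1} ⊆
          (fun p : PBT × PBT => PBT.graft p.1 p.2) ''
            (⋃ k ∈ Finset.range (m + 1),
              {l : PBT | l.size = k} ×ˢ {r : PBT | r.size = m - k}) := by
        intro T hT
        cases T with
        | empty => simp [PBT.size] at hT
        | graft l r =>
          simp only [Set.mem_setOf_eq, PBT.size] at hT
          refine ⟨(l, r), ?_, rfl⟩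
          simp only [Set.mem_iUnion, Finset.mem_range]
          refine ⟨l.size, by omega, ?_⟩
          constructor
          · rfl
          · simp only [Set.mem_setOf_eq]; omega
      apply Set.Finite.subset _ hsub
      apply Set.Finite.image
      apply Set.Finite.biUnion (Finset.range (m + 1)).finite_toSet
      intro k hk
      simp only [Finset.coe_range, Set.mem_Iio] at hk
      exact (ih k (by omega)).prod (ih (m - k) (by omega))

lemma finite_perm_incr {R : List ℕ} (hR : R.Nodup) :
    {L : LPBT | L.inorder.Perm R ∧ L.IsIncreasing}.Finite := by
  apply Set.Finite.of_finite_image (f := LPBT.inorder)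
  · apply Set.Finite.subset (R.permutations.toFinset : Finset (List ℕ)).finite_toSet
    rintro w ⟨L, hL, rfl⟩
    rw [Finset.mem_coe, List.mem_toFinset, List.mem_permutations]
    exact hL.1
  · rintro L₁ h₁ L₂ h₂ heq
    exact increasing_unique L₁ L₂ h₁.2 h₂.2 (h₁.1.nodup_iff.mpr hR) heq

lemma finite_linExts (T : PBT) : (linExts T).Finite := by
  apply Set.Finite.subset (finite_perm_incr (R := List.range' 1 T.size)
    (List.nodup_range' (h := Nat.one_pos)))
  rintro L ⟨_, hp, hi⟩
  exact ⟨hp, hi⟩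

end Auxiliary

/-- For every `n ≥ 0`,
`∑_{T ∈ 𝒯_n} ∑_{e ∈ E(T)} q^{inv(w_e)} = [n]_q!` as polynomials in `ℕ[q]`. -/
theorem stmt_13 (n : ℕ) :
    (∑ᶠ T ∈ {T : PBT | T.size = n},
      ∑ᶠ L ∈ linExts T, (X : Polynomial ℕ) ^ invCount L.inorder) = qFact n := by
  have hST : {T : PBT | T.size = n}.Finite := finite_sized n
  rw [finsum_mem_eq_finite_toFinset_sum _ hST]
  have hinner : ∀ T ∈ hST.toFinset,
      (∑ᶠ L ∈ linExts T, (X : Polynomial ℕ) ^ invCount L.inorder)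
      = ∑ L ∈ (finite_linExts T).toFinset, (X : Polynomial ℕ) ^ invCount L.inorder :=
    fun T _ => finsum_mem_eq_finite_toFinset_sum _ (finite_linExts T)
  rw [Finset.sum_congr rfl hinner, Finset.sum_sigma', ← mahon n]
  apply Finset.sum_bij (fun p _ => p.2.inorder)
  · rintro ⟨T, L⟩ hp
    rw [Finset.mem_sigma, Set.Finite.mem_toFinset, Set.Finite.mem_toFinset] at hp
    obtain ⟨hT, hs, hperm, -⟩ := hp
    rw [List.mem_toFinset, List.mem_permutations]
    rw [Set.mem_setOf_eq] at hT
    rwa [hT] at hperm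
  · rintro ⟨T₁, L₁⟩ h₁ ⟨T₂, L₂⟩ h₂ heq
    rw [Finset.mem_sigma, Set.Finite.mem_toFinset, Set.Finite.mem_toFinset] at h₁ h₂
    obtain ⟨hT₁, hs₁, hperm₁, hinc₁⟩ := h₁
    obtain ⟨hT₂, hs₂, hperm₂, hinc₂⟩ := h₂
    have hnd : L₁.inorder.Nodup := hperm₁.nodup_iff.mpr (List.nodup_range' (h := Nat.one_pos))
    have hL : L₁ = L₂ := increasing_unique L₁ L₂ hinc₁ hinc₂ hnd heq
    subst hL
    have hT : T₁ = T₂ := hs₁.symm.trans hs₂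
    subst hT
    rfl
  · intro w hw
    rw [List.mem_toFinset, List.mem_permutations] at hw
    have hnd : w.Nodup := hw.nodup_iff.mpr (List.nodup_range' (h := Nat.one_pos))
    obtain ⟨L, hL, hinc⟩ := exists_increasing w.length w rfl hnd
    have hsize : L.shape.size = n := by
      rw [← LPBT.length_inorder, hL, hw.length_eq]
      simp
    refine ⟨⟨L.shape, L⟩, ?_, hL⟩
    rw [Finset.mem_sigma, Set.Finite.mem_toFinset, Set.Finite.mem_toFinset]
    refine ⟨hsize, rfl, ?_, hinc⟩
    rw [hsize, hL]
    exact hw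
  · intro p _
    rfl
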